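/- Classification excess-risk transfer inequality (key step in the proof of Theorem 2). For every measurable g : 𝒳 → ℝ, |Φ̃_{0-1}(g) − Φ_{0-1}(g)| ≤ √(Φ̃_{0-1}(g)·χ²(P_X ‖ P_X̃)) + 2·‖η̂ − η‖_{L²(P_X)}·C(g) + Φ_{0-1}(g_{η̂}), where C(g) = √(P(sign(g(X)) ≠ sign(η̂(X) − 1/2))) and g_{η̂}(x) = η̂(x) − 1/2. -/

import Mathlib

open MeasureTheory

lemma my_cs {α : Type*} [MeasurableSpace α] (μ : Measure α) (f g : α → ℝ)
    (hf : AEStronglyMeasurable f μ) (hg : AEStronglyMeasurable g μ)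
    (hf0 : 0 ≤ᵐ[μ] f) (hg0 : 0 ≤ᵐ[μ] g)
    (hf2 : Integrable (fun x => f x ^ 2) μ) (hg2 : Integrable (fun x => g x ^ 2) μ) :
    ∫ x, f x * g x ∂μ ≤ Real.sqrt (∫ x, f x ^ 2 ∂μ) * Real.sqrt (∫ x, g x ^ 2 ∂μ) := by
  have hpq : Real.HolderConjugate 2 2 := Real.HolderConjugate.two_two
  have hfm : MemLp f 2 μ := (memLp_two_iff_integrable_sq hf).2 hf2
  have hgm : MemLp g 2 μ := (memLp_two_iff_integrable_sq hg).2 hg2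
  have h := integral_mul_le_Lp_mul_Lq_of_nonneg hpq hf0 hg0 (by simpa using hfm) (by simpa using hgm)
  have h2 : ∀ y : ℝ, y ^ (2:ℝ) = y ^ 2 := fun y => by
    rw [show (2:ℝ) = ((2:ℕ):ℝ) by norm_num, Real.rpow_natCast]
  simp only [h2] at h
  calc ∫ x, f x * g x ∂μ ≤ (∫ x, f x ^ 2 ∂μ) ^ (1/(2:ℝ)) * (∫ x, g x ^ 2 ∂μ) ^ (1/(2:ℝ)) := h
    _ = _ := by rw [Real.sqrt_eq_rpow, Real.sqrt_eq_rpow]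

lemma my_int_of_bound {k : ℕ} {𝒳 : Set (Fin k → ℝ)} (h𝒳 : MeasurableSet 𝒳)
    {f p : (Fin k → ℝ) → ℝ} (hp : IntegrableOn p 𝒳) (hf : Measurable f)
    (hb : ∀ x ∈ 𝒳, ‖f x‖ ≤ p x) : IntegrableOn f 𝒳 :=
  hp.mono' hf.aestronglyMeasurable ((ae_restrict_iff' h𝒳).2 (ae_of_all _ hb))

lemma my_prod_bound {a b c : ℝ} (ha0 : 0 ≤ a) (ha : a ≤ 1) (hb0 : 0 ≤ b) (hb : b ≤ 1)
    (hc : 0 ≤ c) : ‖a * b * c‖ ≤ c := by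
  rw [Real.norm_eq_abs, abs_of_nonneg (by positivity)]
  calc a * b * c ≤ 1 * 1 * c := by
        apply mul_le_mul (mul_le_mul ha hb hb0 zero_le_one) le_rfl hc (by norm_num)
    _ = c := by ring

lemma my_sq_sqrt_bound {a b c : ℝ} (ha0 : 0 ≤ a) (ha : a ≤ 1) (hb0 : 0 ≤ b) (hb : b ≤ 1)
    (hc : 0 ≤ c) : ‖(a * b * Real.sqrt c) ^ 2‖ ≤ c := by
  rw [Real.norm_eq_abs, abs_of_nonneg (sq_nonneg _), mul_pow, mul_pow, Real.sq_sqrt hc]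
  have ha2 : a ^ 2 ≤ 1 := by nlinarith
  have hb2 : b ^ 2 ≤ 1 := by nlinarith
  calc a ^ 2 * b ^ 2 * c ≤ 1 * 1 * c := by
        apply mul_le_mul (mul_le_mul ha2 hb2 (sq_nonneg b) zero_le_one) le_rfl hc (by norm_num)
    _ = c := by ring


lemma my_abs4 (a b c d : ℝ) : |a - d| ≤ |a - b| + (|b - c| + |c - d|) := by
  have h1 : a - d = (a - b) + ((b - c) + (c - d)) := by ring
  rw [h1]; exact (abs_add_le _ _).trans (add_le_add_right (abs_add_le _ _) _)

/-- **Classification excess-risk transfer inequality** (key step in the proof of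
Theorem 2).  `sign(t) = 1` when `t ≥ 0` and `−1` otherwise;
`Φ_{0-1}(g) = ∫ 1{sign(g) ≠ sign(η − 1/2)} |2η − 1| p_X`,
`Φ̃_{0-1}(g) = ∫ 1{sign(g) ≠ sign(η̂ − 1/2)} |2η̂ − 1| p_X̃`,
`C(g) = √(P(sign(g(X)) ≠ sign(η̂(X) − 1/2)))` and `g_{η̂} = η̂ − 1/2`. -/
theorem stmt3
    {k : ℕ} (𝒳 : Set (Fin k → ℝ)) (h𝒳 : MeasurableSet 𝒳)
    (pX pXt : (Fin k → ℝ) → ℝ)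
    (hpX_meas : Measurable pX) (hpXt_meas : Measurable pXt)
    (hpX_nonneg : ∀ x ∈ 𝒳, 0 ≤ pX x) (hpXt_nonneg : ∀ x ∈ 𝒳, 0 ≤ pXt x)
    (hpX_int : IntegrableOn pX 𝒳) (hpXt_int : IntegrableOn pXt 𝒳)
    (hpX_one : (∫ x in 𝒳, pX x) = 1) (hpXt_one : (∫ x in 𝒳, pXt x) = 1)
    (hpos : ∀ x ∈ 𝒳, 0 < pX x → 0 < pXt x)
    (η ηhat : (Fin k → ℝ) → ℝ)
    (hη : Measurable η) (hηhat : Measurable ηhat)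
    (hη01 : ∀ x ∈ 𝒳, η x ∈ Set.Icc (0 : ℝ) 1) (hηhat01 : ∀ x ∈ 𝒳, ηhat x ∈ Set.Icc (0 : ℝ) 1)
    -- excess risks and the quantity C(g)
    (Φ01 Φt01 Cg : ((Fin k → ℝ) → ℝ) → ℝ)
    (hΦ01 : ∀ g, Φ01 g =
      ∫ x in 𝒳, (if (0 ≤ g x) ↔ (0 ≤ η x - 1 / 2) then (0 : ℝ) else |2 * η x - 1|) * pX x)
    (hΦt01 : ∀ g, Φt01 g =
      ∫ x in 𝒳, (if (0 ≤ g x) ↔ (0 ≤ ηhat x - 1 / 2) then (0 : ℝ) else |2 * ηhat x - 1|) * pXt x)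
    (hCg : ∀ g, Cg g = Real.sqrt
      (∫ x in 𝒳, (if (0 ≤ g x) ↔ (0 ≤ ηhat x - 1 / 2) then (0 : ℝ) else 1) * pX x))
    -- finiteness of the χ²-divergence
    (chi2 : ℝ)
    (hchi2 : chi2 = ∫ x in 𝒳, pXt x * (pX x / pXt x - 1) ^ 2)
    (hchi2_int : IntegrableOn (fun x => pXt x * (pX x / pXt x - 1) ^ 2) 𝒳) :
    ∀ g : (Fin k → ℝ) → ℝ, Measurable g →
      |Φt01 g - Φ01 g| ≤
        Real.sqrt (Φt01 g * chi2)
          + 2 * Real.sqrt (∫ x in 𝒳, (ηhat x - η x) ^ 2 * pX x) * Cg g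
          + Φ01 (fun x => ηhat x - 1 / 2) := by
  intro g hg
  classical
  set A : (Fin k → ℝ) → ℝ := fun x => if (0 ≤ g x) ↔ (0 ≤ ηhat x - 1 / 2) then 0 else 1 with hA
  set B : (Fin k → ℝ) → ℝ := fun x => if (0 ≤ g x) ↔ (0 ≤ η x - 1 / 2) then 0 else 1 with hB
  set D : (Fin k → ℝ) → ℝ :=
    fun x => if (0 ≤ ηhat x - 1 / 2) ↔ (0 ≤ η x - 1 / 2) then 0 else 1 with hD
  -- basic pointwise facts
  have hA01 : ∀ x, A x = 0 ∨ A x = 1 := fun x => by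
    simp only [hA]; split_ifs <;> simp
  have hB01 : ∀ x, B x = 0 ∨ B x = 1 := fun x => by
    simp only [hB]; split_ifs <;> simp
  have hA0 : ∀ x, 0 ≤ A x := fun x => by rcases hA01 x with h | h <;> rw [h] <;> norm_num
  have hA1 : ∀ x, A x ≤ 1 := fun x => by rcases hA01 x with h | h <;> rw [h] <;> norm_num
  have hB0 : ∀ x, 0 ≤ B x := fun x => by rcases hB01 x with h | h <;> rw [h] <;> norm_num
  have hB1 : ∀ x, B x ≤ 1 := fun x => by rcases hB01 x with h | h <;> rw [h] <;> norm_num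
  have habs_hat : ∀ x ∈ 𝒳, |2 * ηhat x - 1| ≤ 1 := by
    intro x hx; obtain ⟨h0, h1⟩ := hηhat01 x hx; rw [abs_le]; constructor <;> linarith
  have habs_eta : ∀ x ∈ 𝒳, |2 * η x - 1| ≤ 1 := by
    intro x hx; obtain ⟨h0, h1⟩ := hη01 x hx; rw [abs_le]; constructor <;> linarith
  have hd1 : ∀ x ∈ 𝒳, |ηhat x - η x| ≤ 1 := by
    intro x hx; obtain ⟨h0, h1⟩ := hηhat01 x hx; obtain ⟨h2, h3⟩ := hη01 x hx
    rw [abs_le]; constructor <;> linarith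
  -- measurability
  have hsetA : MeasurableSet {x | (0 ≤ g x) ↔ (0 ≤ ηhat x - 1 / 2)} := by
    have h1 : MeasurableSet {x | 0 ≤ g x} := measurableSet_le measurable_const hg
    have h2 : MeasurableSet {x | 0 ≤ ηhat x - 1 / 2} :=
      measurableSet_le measurable_const (hηhat.sub measurable_const)
    have he : {x | (0 ≤ g x) ↔ (0 ≤ ηhat x - 1 / 2)} =
        ({x | 0 ≤ g x} ∩ {x | 0 ≤ ηhat x - 1 / 2}) ∪
          ({x | 0 ≤ g x}ᶜ ∩ {x | 0 ≤ ηhat x - 1 / 2}ᶜ) := by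
      ext x
      simp only [Set.mem_setOf_eq, Set.mem_union, Set.mem_inter_iff, Set.mem_compl_iff]
      tauto
    rw [he]; exact (h1.inter h2).union (h1.compl.inter h2.compl)
  have hsetB : MeasurableSet {x | (0 ≤ g x) ↔ (0 ≤ η x - 1 / 2)} := by
    have h1 : MeasurableSet {x | 0 ≤ g x} := measurableSet_le measurable_const hg
    have h2 : MeasurableSet {x | 0 ≤ η x - 1 / 2} :=
      measurableSet_le measurable_const (hη.sub measurable_const)
    have he : {x | (0 ≤ g x) ↔ (0 ≤ η x - 1 / 2)} =
        ({x | 0 ≤ g x} ∩ {x | 0 ≤ η x - 1 / 2}) ∪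
          ({x | 0 ≤ g x}ᶜ ∩ {x | 0 ≤ η x - 1 / 2}ᶜ) := by
      ext x
      simp only [Set.mem_setOf_eq, Set.mem_union, Set.mem_inter_iff, Set.mem_compl_iff]
      tauto
    rw [he]; exact (h1.inter h2).union (h1.compl.inter h2.compl)
  have hsetD : MeasurableSet {x | (0 ≤ ηhat x - 1 / 2) ↔ (0 ≤ η x - 1 / 2)} := by
    have h1 : MeasurableSet {x | 0 ≤ ηhat x - 1 / 2} :=
      measurableSet_le measurable_const (hηhat.sub measurable_const)
    have h2 : MeasurableSet {x | 0 ≤ η x - 1 / 2} :=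
      measurableSet_le measurable_const (hη.sub measurable_const)
    have he : {x | (0 ≤ ηhat x - 1 / 2) ↔ (0 ≤ η x - 1 / 2)} =
        ({x | 0 ≤ ηhat x - 1 / 2} ∩ {x | 0 ≤ η x - 1 / 2}) ∪
          ({x | 0 ≤ ηhat x - 1 / 2}ᶜ ∩ {x | 0 ≤ η x - 1 / 2}ᶜ) := by
      ext x
      simp only [Set.mem_setOf_eq, Set.mem_union, Set.mem_inter_iff, Set.mem_compl_iff]
      tauto
    rw [he]; exact (h1.inter h2).union (h1.compl.inter h2.compl)
  have hAm : Measurable A := Measurable.ite hsetA measurable_const measurable_const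
  have hBm : Measurable B := Measurable.ite hsetB measurable_const measurable_const
  have hDm : Measurable D := Measurable.ite hsetD measurable_const measurable_const
  have hmhm : Measurable (fun x => |2 * ηhat x - 1|) :=
    ((hηhat.const_mul 2).sub measurable_const).abs
  have hmm : Measurable (fun x => |2 * η x - 1|) :=
    ((hη.const_mul 2).sub measurable_const).abs
  have hsqXt : Measurable (fun x => Real.sqrt (pXt x)) :=
    Real.continuous_sqrt.measurable.comp hpXt_meas
  have hsqX : Measurable (fun x => Real.sqrt (pX x)) :=
    Real.continuous_sqrt.measurable.comp hpX_meas
  -- integrability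
  have hF1 : IntegrableOn (fun x => A x * |2 * ηhat x - 1| * pXt x) 𝒳 :=
    my_int_of_bound h𝒳 hpXt_int ((hAm.mul hmhm).mul hpXt_meas) fun x hx =>
      my_prod_bound (hA0 x) (hA1 x) (abs_nonneg _) (habs_hat x hx) (hpXt_nonneg x hx)
  have hF2 : IntegrableOn (fun x => A x * |2 * ηhat x - 1| * pX x) 𝒳 :=
    my_int_of_bound h𝒳 hpX_int ((hAm.mul hmhm).mul hpX_meas) fun x hx =>
      my_prod_bound (hA0 x) (hA1 x) (abs_nonneg _) (habs_hat x hx) (hpX_nonneg x hx)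
  have hF3 : IntegrableOn (fun x => A x * |2 * η x - 1| * pX x) 𝒳 :=
    my_int_of_bound h𝒳 hpX_int ((hAm.mul hmm).mul hpX_meas) fun x hx =>
      my_prod_bound (hA0 x) (hA1 x) (abs_nonneg _) (habs_eta x hx) (hpX_nonneg x hx)
  have hF4 : IntegrableOn (fun x => B x * |2 * η x - 1| * pX x) 𝒳 :=
    my_int_of_bound h𝒳 hpX_int ((hBm.mul hmm).mul hpX_meas) fun x hx =>
      my_prod_bound (hB0 x) (hB1 x) (abs_nonneg _) (habs_eta x hx) (hpX_nonneg x hx)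
  have hFD : IntegrableOn (fun x => D x * |2 * η x - 1| * pX x) 𝒳 := by
    refine my_int_of_bound h𝒳 hpX_int ((hDm.mul hmm).mul hpX_meas) fun x hx => ?_
    have hD0 : 0 ≤ D x := by
      simp only [hD]; split_ifs <;> norm_num
    have hD1 : D x ≤ 1 := by
      simp only [hD]; split_ifs <;> norm_num
    exact my_prod_bound hD0 hD1 (abs_nonneg _) (habs_eta x hx) (hpX_nonneg x hx)
  have hF5 : IntegrableOn
      (fun x => (A x * |2 * ηhat x - 1| * Real.sqrt (pXt x)) ^ 2) 𝒳 :=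
    my_int_of_bound h𝒳 hpXt_int (((hAm.mul hmhm).mul hsqXt).pow_const 2) fun x hx =>
      my_sq_sqrt_bound (hA0 x) (hA1 x) (abs_nonneg _) (habs_hat x hx) (hpXt_nonneg x hx)
  have key6 : ∀ x ∈ 𝒳,
      (|pXt x - pX x| / Real.sqrt (pXt x)) ^ 2 = pXt x * (pX x / pXt x - 1) ^ 2 := by
    intro x hx
    rcases (hpXt_nonneg x hx).eq_or_lt with h0 | h0
    · rw [← h0]; simp
    · have hne : pXt x ≠ 0 := ne_of_gt h0
      rw [div_pow, sq_abs, Real.sq_sqrt h0.le]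
      field_simp
      ring
  have hH2int : IntegrableOn (fun x => (|pXt x - pX x| / Real.sqrt (pXt x)) ^ 2) 𝒳 :=
    hchi2_int.congr ((ae_restrict_iff' h𝒳).2 (ae_of_all _ fun x hx => (key6 x hx).symm))
  have hzero : ∀ x ∈ 𝒳, pXt x = 0 → pX x = 0 := by
    intro x hx h0
    by_contra hne
    have hp := hpos x hx (lt_of_le_of_ne (hpX_nonneg x hx) (Ne.symm hne))
    rw [h0] at hp; exact lt_irrefl 0 hp
  have hFfh : IntegrableOn (fun x => (A x * |2 * ηhat x - 1| * Real.sqrt (pXt x)) *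
      (|pXt x - pX x| / Real.sqrt (pXt x))) 𝒳 := by
    refine my_int_of_bound h𝒳 (hpXt_int.add hpX_int)
      (((hAm.mul hmhm).mul hsqXt).mul
        (((hpXt_meas.sub hpX_meas).abs).div hsqXt)) fun x hx => ?_
    have h1 : Real.sqrt (pXt x) * (|pXt x - pX x| / Real.sqrt (pXt x)) ≤ |pXt x - pX x| := by
      rcases eq_or_ne (Real.sqrt (pXt x)) 0 with h | h
      · simp [h, abs_nonneg]
      · rw [mul_comm, div_mul_cancel₀ _ h]
    have hnn : 0 ≤ (A x * |2 * ηhat x - 1| * Real.sqrt (pXt x)) *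
        (|pXt x - pX x| / Real.sqrt (pXt x)) :=
      mul_nonneg (mul_nonneg (mul_nonneg (hA0 x) (abs_nonneg _)) (Real.sqrt_nonneg _))
        (div_nonneg (abs_nonneg _) (Real.sqrt_nonneg _))
    rw [Real.norm_eq_abs, abs_of_nonneg hnn]
    have habsd : |pXt x - pX x| ≤ pXt x + pX x :=
      abs_le.mpr ⟨by linarith [hpX_nonneg x hx, hpXt_nonneg x hx],
        by linarith [hpX_nonneg x hx, hpXt_nonneg x hx]⟩
    have hAm1 : A x * |2 * ηhat x - 1| ≤ 1 := by
      nlinarith [hA0 x, hA1 x, habs_hat x hx, abs_nonneg (2 * ηhat x - 1)]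
    calc (A x * |2 * ηhat x - 1| * Real.sqrt (pXt x)) * (|pXt x - pX x| / Real.sqrt (pXt x))
        = (A x * |2 * ηhat x - 1|) *
          (Real.sqrt (pXt x) * (|pXt x - pX x| / Real.sqrt (pXt x))) := by ring
      _ ≤ 1 * |pXt x - pX x| := by
          apply mul_le_mul hAm1 h1 (mul_nonneg (Real.sqrt_nonneg _)
            (div_nonneg (abs_nonneg _) (Real.sqrt_nonneg _))) zero_le_one
      _ ≤ pXt x + pX x := by rw [one_mul]; exact habsd
  have hFf2g2 : IntegrableOn (fun x => (|ηhat x - η x| * Real.sqrt (pX x)) *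
      (A x * Real.sqrt (pX x))) 𝒳 := by
    refine my_int_of_bound h𝒳 hpX_int
      (((hηhat.sub hη).abs.mul hsqX).mul (hAm.mul hsqX)) fun x hx => ?_
    have he : (|ηhat x - η x| * Real.sqrt (pX x)) * (A x * Real.sqrt (pX x))
        = |ηhat x - η x| * A x * pX x := by
      rw [show (|ηhat x - η x| * Real.sqrt (pX x)) * (A x * Real.sqrt (pX x))
          = |ηhat x - η x| * A x * (Real.sqrt (pX x) * Real.sqrt (pX x)) from by ring,
        Real.mul_self_sqrt (hpX_nonneg x hx)]
    rw [he]
    exact my_prod_bound (abs_nonneg _) (hd1 x hx) (hA0 x) (hA1 x) (hpX_nonneg x hx)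
  have hFf2sq : IntegrableOn (fun x => (|ηhat x - η x| * Real.sqrt (pX x)) ^ 2) 𝒳 := by
    refine my_int_of_bound h𝒳 hpX_int
      (((hηhat.sub hη).abs.mul hsqX).pow_const 2) fun x hx => ?_
    rw [Real.norm_eq_abs, abs_of_nonneg (sq_nonneg _), mul_pow, sq_abs,
      Real.sq_sqrt (hpX_nonneg x hx)]
    have hsq1 : (ηhat x - η x) ^ 2 ≤ 1 := by
      nlinarith [hd1 x hx, abs_nonneg (ηhat x - η x), sq_abs (ηhat x - η x)]
    calc (ηhat x - η x) ^ 2 * pX x ≤ 1 * pX x :=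
          mul_le_mul_of_nonneg_right hsq1 (hpX_nonneg x hx)
      _ = pX x := one_mul _
  have hFg2sq : IntegrableOn (fun x => (A x * Real.sqrt (pX x)) ^ 2) 𝒳 := by
    refine my_int_of_bound h𝒳 hpX_int ((hAm.mul hsqX).pow_const 2) fun x hx => ?_
    rw [Real.norm_eq_abs, abs_of_nonneg (sq_nonneg _), mul_pow,
      Real.sq_sqrt (hpX_nonneg x hx)]
    have hsq1 : A x ^ 2 ≤ 1 := by rcases hA01 x with h | h <;> rw [h] <;> norm_num
    calc A x ^ 2 * pX x ≤ 1 * pX x := mul_le_mul_of_nonneg_right hsq1 (hpX_nonneg x hx)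
      _ = pX x := one_mul _
  -- rewriting the defined quantities
  have hΦt_eq : Φt01 g = ∫ x in 𝒳, A x * |2 * ηhat x - 1| * pXt x := by
    rw [hΦt01 g]
    refine integral_congr_ae (ae_of_all _ fun x => ?_)
    simp only [hA]; split_ifs <;> ring
  have hΦ_eq : Φ01 g = ∫ x in 𝒳, B x * |2 * η x - 1| * pX x := by
    rw [hΦ01 g]
    refine integral_congr_ae (ae_of_all _ fun x => ?_)
    simp only [hB]; split_ifs <;> ring
  have hΦD_eq : Φ01 (fun x => ηhat x - 1 / 2) = ∫ x in 𝒳, D x * |2 * η x - 1| * pX x := by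
    rw [hΦ01 (fun x => ηhat x - 1 / 2)]
    refine integral_congr_ae (ae_of_all _ fun x => ?_)
    simp only [hD]; split_ifs <;> ring
  have hCg_eq : Cg g = Real.sqrt (∫ x in 𝒳, A x * pX x) := by rw [hCg g]
  have hΦt_nonneg : 0 ≤ Φt01 g := by
    rw [hΦt_eq]
    exact setIntegral_nonneg h𝒳 fun x hx =>
      mul_nonneg (mul_nonneg (hA0 x) (abs_nonneg _)) (hpXt_nonneg x hx)
  have hchi_eq : chi2 = ∫ x in 𝒳, (|pXt x - pX x| / Real.sqrt (pXt x)) ^ 2 := by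
    rw [hchi2]
    exact (setIntegral_congr_fun h𝒳 fun x hx => key6 x hx).symm
  -- Term 1
  have hb1 : |(∫ x in 𝒳, A x * |2 * ηhat x - 1| * pXt x) -
      ∫ x in 𝒳, A x * |2 * ηhat x - 1| * pX x| ≤ Real.sqrt (Φt01 g * chi2) := by
    have hsub : (∫ x in 𝒳, A x * |2 * ηhat x - 1| * pXt x) -
        (∫ x in 𝒳, A x * |2 * ηhat x - 1| * pX x) =
        ∫ x in 𝒳, (A x * |2 * ηhat x - 1| * pXt x - A x * |2 * ηhat x - 1| * pX x) :=
      (integral_sub hF1 hF2).symm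
    rw [hsub, ← Real.norm_eq_abs]
    have step1 : ‖∫ x in 𝒳, (A x * |2 * ηhat x - 1| * pXt x - A x * |2 * ηhat x - 1| * pX x)‖
        ≤ ∫ x in 𝒳, (A x * |2 * ηhat x - 1| * Real.sqrt (pXt x)) *
            (|pXt x - pX x| / Real.sqrt (pXt x)) := by
      apply norm_integral_le_of_norm_le hFfh
      rw [ae_restrict_iff' h𝒳]
      refine ae_of_all _ fun x hx => ?_
      rcases (hpXt_nonneg x hx).eq_or_lt with h0 | h0
      · have hpx0 : pX x = 0 := hzero x hx h0.symm
        rw [← h0]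
        simp [hpx0]
      · have hne : Real.sqrt (pXt x) ≠ 0 := ne_of_gt (Real.sqrt_pos.2 h0)
        have he : (A x * |2 * ηhat x - 1| * Real.sqrt (pXt x)) *
            (|pXt x - pX x| / Real.sqrt (pXt x)) = A x * |2 * ηhat x - 1| * |pXt x - pX x| := by
          field_simp
        rw [he, show A x * |2 * ηhat x - 1| * pXt x - A x * |2 * ηhat x - 1| * pX x
            = A x * |2 * ηhat x - 1| * (pXt x - pX x) by ring, Real.norm_eq_abs,
          abs_mul, abs_mul, abs_of_nonneg (hA0 x), abs_abs]
    have step2 := my_cs (volume.restrict 𝒳)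
      (fun x => A x * |2 * ηhat x - 1| * Real.sqrt (pXt x))
      (fun x => |pXt x - pX x| / Real.sqrt (pXt x))
      ((hAm.mul hmhm).mul hsqXt).aestronglyMeasurable
      ((((hpXt_meas.sub hpX_meas).abs).div hsqXt)).aestronglyMeasurable
      (ae_of_all _ fun x =>
        mul_nonneg (mul_nonneg (hA0 x) (abs_nonneg _)) (Real.sqrt_nonneg _))
      (ae_of_all _ fun x => div_nonneg (abs_nonneg _) (Real.sqrt_nonneg _))
      hF5 hH2int
    have step3 : (∫ x in 𝒳, (A x * |2 * ηhat x - 1| * Real.sqrt (pXt x)) ^ 2) ≤ Φt01 g := by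
      rw [hΦt_eq]
      refine setIntegral_mono_on hF5 hF1 h𝒳 fun x hx => ?_
      rw [mul_pow, mul_pow, Real.sq_sqrt (hpXt_nonneg x hx)]
      rcases hA01 x with h | h <;> rw [h]
      · simp
      · rw [one_pow, one_mul, one_mul]
        nlinarith [mul_nonneg (mul_nonneg (abs_nonneg (2 * ηhat x - 1))
          (sub_nonneg.2 (habs_hat x hx))) (hpXt_nonneg x hx)]
    calc ‖∫ x in 𝒳, (A x * |2 * ηhat x - 1| * pXt x - A x * |2 * ηhat x - 1| * pX x)‖
        ≤ ∫ x in 𝒳, (A x * |2 * ηhat x - 1| * Real.sqrt (pXt x)) *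
            (|pXt x - pX x| / Real.sqrt (pXt x)) := step1
      _ ≤ Real.sqrt (∫ x in 𝒳, (A x * |2 * ηhat x - 1| * Real.sqrt (pXt x)) ^ 2) *
          Real.sqrt (∫ x in 𝒳, (|pXt x - pX x| / Real.sqrt (pXt x)) ^ 2) := step2
      _ ≤ Real.sqrt (Φt01 g) * Real.sqrt chi2 := by
          apply mul_le_mul (Real.sqrt_le_sqrt step3) (le_of_eq (by rw [hchi_eq]))
            (Real.sqrt_nonneg _) (Real.sqrt_nonneg _)
      _ = Real.sqrt (Φt01 g * chi2) := (Real.sqrt_mul hΦt_nonneg _).symm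
  -- Term 2
  have hb2 : |(∫ x in 𝒳, A x * |2 * ηhat x - 1| * pX x) -
      ∫ x in 𝒳, A x * |2 * η x - 1| * pX x| ≤
      2 * Real.sqrt (∫ x in 𝒳, (ηhat x - η x) ^ 2 * pX x) * Cg g := by
    have hsub : (∫ x in 𝒳, A x * |2 * ηhat x - 1| * pX x) -
        (∫ x in 𝒳, A x * |2 * η x - 1| * pX x) =
        ∫ x in 𝒳, (A x * |2 * ηhat x - 1| * pX x - A x * |2 * η x - 1| * pX x) :=
      (integral_sub hF2 hF3).symm
    rw [hsub, ← Real.norm_eq_abs]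
    have step1 : ‖∫ x in 𝒳, (A x * |2 * ηhat x - 1| * pX x - A x * |2 * η x - 1| * pX x)‖
        ≤ ∫ x in 𝒳, 2 * ((|ηhat x - η x| * Real.sqrt (pX x)) * (A x * Real.sqrt (pX x))) := by
      apply norm_integral_le_of_norm_le (hFf2g2.const_mul 2)
      rw [ae_restrict_iff' h𝒳]
      refine ae_of_all _ fun x hx => ?_
      have habs2 : abs (|2 * ηhat x - 1| - |2 * η x - 1|) ≤ 2 * |ηhat x - η x| := by
        calc abs (|2 * ηhat x - 1| - |2 * η x - 1|)
            ≤ abs ((2 * ηhat x - 1) - (2 * η x - 1)) := abs_abs_sub_abs_le_abs_sub _ _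
          _ = 2 * |ηhat x - η x| := by
              rw [show (2 * ηhat x - 1) - (2 * η x - 1) = 2 * (ηhat x - η x) by ring,
                abs_mul, abs_two]
      have hre : A x * |2 * ηhat x - 1| * pX x - A x * |2 * η x - 1| * pX x
          = A x * ((|2 * ηhat x - 1| - |2 * η x - 1|) * pX x) := by ring
      rw [hre, Real.norm_eq_abs, abs_mul, abs_mul, abs_of_nonneg (hA0 x),
        abs_of_nonneg (hpX_nonneg x hx)]
      have hsq : Real.sqrt (pX x) * Real.sqrt (pX x) = pX x :=
        Real.mul_self_sqrt (hpX_nonneg x hx)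
      calc A x * (abs (|2 * ηhat x - 1| - |2 * η x - 1|) * pX x)
          ≤ A x * ((2 * |ηhat x - η x|) * pX x) := by
            apply mul_le_mul_of_nonneg_left
              (mul_le_mul_of_nonneg_right habs2 (hpX_nonneg x hx)) (hA0 x)
        _ = 2 * ((|ηhat x - η x| * Real.sqrt (pX x)) * (A x * Real.sqrt (pX x))) := by
            rw [show 2 * ((|ηhat x - η x| * Real.sqrt (pX x)) * (A x * Real.sqrt (pX x)))
                = A x * (2 * |ηhat x - η x| * (Real.sqrt (pX x) * Real.sqrt (pX x)))
                from by ring, hsq]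
    have step2 : (∫ x in 𝒳,
        2 * ((|ηhat x - η x| * Real.sqrt (pX x)) * (A x * Real.sqrt (pX x)))) =
        2 * ∫ x in 𝒳, (|ηhat x - η x| * Real.sqrt (pX x)) * (A x * Real.sqrt (pX x)) :=
      integral_const_mul 2 _
    have step3 := my_cs (volume.restrict 𝒳)
      (fun x => |ηhat x - η x| * Real.sqrt (pX x)) (fun x => A x * Real.sqrt (pX x))
      ((hηhat.sub hη).abs.mul hsqX).aestronglyMeasurable
      (hAm.mul hsqX).aestronglyMeasurable
      (ae_of_all _ fun x => mul_nonneg (abs_nonneg _) (Real.sqrt_nonneg _))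
      (ae_of_all _ fun x => mul_nonneg (hA0 x) (Real.sqrt_nonneg _))
      hFf2sq hFg2sq
    have e1 : (∫ x in 𝒳, (|ηhat x - η x| * Real.sqrt (pX x)) ^ 2) =
        ∫ x in 𝒳, (ηhat x - η x) ^ 2 * pX x :=
      setIntegral_congr_fun h𝒳 fun x hx => by
        rw [mul_pow, sq_abs, Real.sq_sqrt (hpX_nonneg x hx)]
    have e2 : Real.sqrt (∫ x in 𝒳, (A x * Real.sqrt (pX x)) ^ 2) = Cg g := by
      rw [hCg_eq]
      congr 1
      refine setIntegral_congr_fun h𝒳 fun x hx => ?_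
      rw [mul_pow, Real.sq_sqrt (hpX_nonneg x hx)]
      rcases hA01 x with h | h <;> rw [h] <;> norm_num
    calc ‖∫ x in 𝒳, (A x * |2 * ηhat x - 1| * pX x - A x * |2 * η x - 1| * pX x)‖
        ≤ ∫ x in 𝒳, 2 * ((|ηhat x - η x| * Real.sqrt (pX x)) * (A x * Real.sqrt (pX x))) :=
          step1
      _ = 2 * ∫ x in 𝒳, (|ηhat x - η x| * Real.sqrt (pX x)) * (A x * Real.sqrt (pX x)) :=
          step2
      _ ≤ 2 * (Real.sqrt (∫ x in 𝒳, (|ηhat x - η x| * Real.sqrt (pX x)) ^ 2) *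
          Real.sqrt (∫ x in 𝒳, (A x * Real.sqrt (pX x)) ^ 2)) := by linarith
      _ = 2 * Real.sqrt (∫ x in 𝒳, (ηhat x - η x) ^ 2 * pX x) * Cg g := by
          rw [e1, e2]; ring
  -- Term 3
  have hb3 : |(∫ x in 𝒳, A x * |2 * η x - 1| * pX x) -
      ∫ x in 𝒳, B x * |2 * η x - 1| * pX x| ≤ Φ01 (fun x => ηhat x - 1 / 2) := by
    have hsub : (∫ x in 𝒳, A x * |2 * η x - 1| * pX x) -
        (∫ x in 𝒳, B x * |2 * η x - 1| * pX x) =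
        ∫ x in 𝒳, (A x * |2 * η x - 1| * pX x - B x * |2 * η x - 1| * pX x) :=
      (integral_sub hF3 hF4).symm
    rw [hsub, ← Real.norm_eq_abs, hΦD_eq]
    apply norm_integral_le_of_norm_le hFD
    rw [ae_restrict_iff' h𝒳]
    refine ae_of_all _ fun x hx => ?_
    have hAB : |A x - B x| = D x := by
      have e : |A x - B x| = |(if (0 ≤ g x) ↔ (0 ≤ ηhat x - 1 / 2) then (0:ℝ) else 1) -
          (if (0 ≤ g x) ↔ (0 ≤ η x - 1 / 2) then (0:ℝ) else 1)| := rfl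
      have e3 : D x = if (0 ≤ ηhat x - 1 / 2) ↔ (0 ≤ η x - 1 / 2) then (0:ℝ) else 1 := rfl
      rw [e, e3]
      by_cases h1 : (0 ≤ g x) ↔ (0 ≤ ηhat x - 1 / 2) <;>
        by_cases h2 : (0 ≤ g x) ↔ (0 ≤ η x - 1 / 2) <;>
        by_cases h3 : (0 ≤ ηhat x - 1 / 2) ↔ (0 ≤ η x - 1 / 2) <;>
        first
          | (rw [if_pos h1, if_pos h2, if_pos h3]; simp)
          | (rw [if_pos h1, if_neg h2, if_neg h3]; simp)
          | (rw [if_neg h1, if_pos h2, if_neg h3]; simp)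
          | (rw [if_neg h1, if_neg h2, if_pos h3]; simp)
          | exact absurd (h1.symm.trans h2) h3
          | exact absurd (h1.trans h3) h2
          | exact absurd (h2.trans h3.symm) h1
          | exact absurd ((not_iff.mp h1).symm.trans (not_iff.mp h2)) h3
    have he : A x * |2 * η x - 1| * pX x - B x * |2 * η x - 1| * pX x
        = (A x - B x) * (|2 * η x - 1| * pX x) := by ring
    rw [he, Real.norm_eq_abs, abs_mul, hAB,
      abs_of_nonneg (mul_nonneg (abs_nonneg _) (hpX_nonneg x hx)), ← mul_assoc]
  -- combine
  have tri : |Φt01 g - Φ01 g| ≤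
      |(∫ x in 𝒳, A x * |2 * ηhat x - 1| * pXt x) -
        ∫ x in 𝒳, A x * |2 * ηhat x - 1| * pX x| +
      (|(∫ x in 𝒳, A x * |2 * ηhat x - 1| * pX x) -
        ∫ x in 𝒳, A x * |2 * η x - 1| * pX x| +
      |(∫ x in 𝒳, A x * |2 * η x - 1| * pX x) -
        ∫ x in 𝒳, B x * |2 * η x - 1| * pX x|) := by
    rw [hΦt_eq, hΦ_eq]
    exact my_abs4 _ _ _ _
  linarith [hb1, hb2, hb3, tri]
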